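/- For every integer e ≥ 4, the largest real root ψ_e of the polynomial Ψ_e satisfies ψ_e > k_e + 1. -/

import Mathlib

open Polynomial Matrix

attribute [local instance] Classical.propDecidable

/-- The spectral radius of a finite simple graph: the largest modulus of a (real)
eigenvalue of its adjacency matrix. -/
noncomputable def specRad {V : Type} [Fintype V] (G : SimpleGraph V) : ℝ :=
  sSup { r : ℝ | ∃ μ : ℝ, (∃ v : V → ℝ, v ≠ 0 ∧ (G.adjMatrix ℝ) *ᵥ v = μ • v) ∧ r = |μ| }

/-- The characteristic polynomial of the adjacency matrix of a graph. -/
noncomputable def gCharPoly {V : Type} [Fintype V] (G : SimpleGraph V) : Polynomial ℝ :=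
  Matrix.charpoly (G.adjMatrix ℝ)

/-- `G` is a connected graph with `n` vertices and `n - 1 + e` edges. -/
def memC (n e : ℕ) (G : SimpleGraph (Fin n)) : Prop :=
  G.Connected ∧ G.edgeSet.ncard = n - 1 + e

/-- `kk e` is the largest natural number `k` with `k * (k - 1) / 2 ≤ e`. -/
def kk (e : ℕ) : ℕ := Nat.findGreatest (fun k => k * (k - 1) ≤ 2 * e) (e + 2)

def tt (e : ℕ) : ℕ := e - kk e * (kk e - 1) / 2

def bb (e : ℕ) : ℕ := if e = 0 then 1 else if tt e = 0 then kk e + 1 else kk e + 2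

/-- The graph `V_{n,e} = (K_{1,e} + (n-e-2)K_1) ∨ K_1` (vertices `0`-based: paper vertex `i`
is `i - 1` here): vertex `0` is adjacent to all other vertices, vertex `1` is additionally
adjacent to vertices `2, …, e+1`, and there are no other edges. -/
def graphV (n e : ℕ) : SimpleGraph (Fin n) :=
  SimpleGraph.fromRel (fun i j => (i : ℕ) = 0 ∨ ((i : ℕ) = 1 ∧ 2 ≤ (j : ℕ) ∧ (j : ℕ) ≤ e + 1))

/-- The graph `D_{n,e}` (vertices `0`-based): vertex `0` is adjacent to all other vertices,
and for `1 ≤ i < j`, vertices `i` and `j` are adjacent iff `j ≤ kk e` or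
(`j = kk e + 1` and `i ≤ tt e`).  For `n < kk e + 2` this is the complete graph. -/
def graphD (n e : ℕ) : SimpleGraph (Fin n) :=
  SimpleGraph.fromRel (fun i j =>
    (i : ℕ) = 0 ∨ (1 ≤ (i : ℕ) ∧ (i : ℕ) < (j : ℕ) ∧
      ((j : ℕ) ≤ kk e ∨ ((j : ℕ) = kk e + 1 ∧ (i : ℕ) ≤ tt e))))

/-- A graph on `Fin n` whose adjacency matrix is stepwise (i.e. a threshold graph whose
vertices are already arranged in the canonical order). -/
def IsStepwise {n : ℕ} (G : SimpleGraph (Fin n)) : Prop :=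
  ∀ i j k l : Fin n, G.Adj i j → i < j → k < l → k ≤ i → l ≤ j → G.Adj k l

/-- The (0-based) index of the last vertex of degree at least 2, i.e. the paper's `s - 1`. -/
noncomputable def sIdx {n : ℕ} (G : SimpleGraph (Fin n)) : ℕ :=
  Nat.findGreatest (fun i => ∃ h : i < n, 2 ≤ (G.neighborSet ⟨i, h⟩).ncard) (n - 1)

/-- The T-subgraph `T(G)`: the subgraph of `G` induced on vertices `1, …, sIdx G`
(paper vertices `2, …, s`). -/
noncomputable def Tgraph {n : ℕ} (G : SimpleGraph (Fin n)) : SimpleGraph (Fin (sIdx G)) :=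
  SimpleGraph.comap (fun i => (⟨(i : ℕ) + 1, by
    have h1 : (i : ℕ) < sIdx G := i.isLt
    have h2 : sIdx G ≤ n - 1 := by unfold sIdx; exact Nat.findGreatest_le _
    omega⟩ : Fin n)) G

/-- The graph `T1(G) = T(G) ∨ K_1`: the subgraph of `G` induced on vertices
`0, 1, …, sIdx G` (paper vertices `1, …, s`). -/
noncomputable def T1graph {n : ℕ} (G : SimpleGraph (Fin n)) : SimpleGraph (Fin (sIdx G + 1)) :=
  if h : 0 < n then
    SimpleGraph.comap (fun i => (⟨(i : ℕ) % n, Nat.mod_lt _ h⟩ : Fin n)) G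
  else ⊥

/-- The rational function `R_G(λ) = λ · P_{T1(G)}(λ) / P_{T(G)}(λ)`. -/
noncomputable def Rfun {n : ℕ} (G : SimpleGraph (Fin n)) : ℝ → ℝ :=
  fun x => x * (gCharPoly (T1graph G)).eval x / (gCharPoly (Tgraph G)).eval x

/-- The polynomial `Q_{G1,G2}`. -/
noncomputable def Qpoly {n : ℕ} (G1 G2 : SimpleGraph (Fin n)) : Polynomial ℝ :=
  X * (gCharPoly (T1graph G1) * gCharPoly (Tgraph G2)
       - gCharPoly (T1graph G2) * gCharPoly (Tgraph G1))
  + C ((sIdx G1 : ℝ) - (sIdx G2 : ℝ)) * (gCharPoly (Tgraph G1) * gCharPoly (Tgraph G2))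

/-- `r` is the largest real root of the polynomial `P`. -/
def IsGreatestRoot (P : Polynomial ℝ) (r : ℝ) : Prop :=
  P.eval r = 0 ∧ ∀ x : ℝ, P.eval x = 0 → x ≤ r

/-- `r` is the largest real zero of the function `f`. -/
def IsGreatestZero (f : ℝ → ℝ) (r : ℝ) : Prop :=
  f r = 0 ∧ ∀ x : ℝ, f x = 0 → x ≤ r

/-- Disjoint union of two simple graphs. -/
def gSum {α β : Type} (G : SimpleGraph α) (H : SimpleGraph β) : SimpleGraph (α ⊕ β) where
  Adj x y := (∃ a b, x = Sum.inl a ∧ y = Sum.inl b ∧ G.Adj a b) ∨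
             (∃ a b, x = Sum.inr a ∧ y = Sum.inr b ∧ H.Adj a b)
  symm := by
    constructor
    rintro x y (⟨a, b, rfl, rfl, hab⟩ | ⟨a, b, rfl, rfl, hab⟩)
    · exact Or.inl ⟨b, a, rfl, rfl, hab.symm⟩
    · exact Or.inr ⟨b, a, rfl, rfl, hab.symm⟩
  loopless := by
    constructor
    rintro x (⟨a, b, rfl, hx, hab⟩ | ⟨a, b, rfl, hx, hab⟩)
    · obtain rfl := Sum.inl.inj hx; exact G.irrefl hab
    · obtain rfl := Sum.inr.inj hx; exact H.irrefl hab

/-- Join of two simple graphs: all cross edges are present. -/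
def gJoin {α β : Type} (G : SimpleGraph α) (H : SimpleGraph β) : SimpleGraph (α ⊕ β) :=
  (gSum Gᶜ Hᶜ)ᶜ

/-- The polynomial `Ψ_e`. -/
noncomputable def PsiPoly (e : ℕ) : Polynomial ℝ :=
  let k : ℝ := kk e
  let t : ℝ := tt e
  C ((k - 1) * (k - 2) * (k ^ 2 - 3 * k + 4 * t)) * X ^ 3
  - C (k ^ 5 - 6 * k ^ 4 + k ^ 3 * (4 * t + 15) - k ^ 2 * (20 * t + 18)
        + k * (8 * t ^ 2 + 24 * t + 8) - (4 * t ^ 2 + 12 * t)) * X ^ 2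
  - C ((k ^ 2 - k + 2 * t) * (k ^ 3 + k ^ 2 * (t - 4) - k * (3 * t - 5)
        + (4 * t ^ 2 - 2 * t - 2))) * X
  + C (t * (k - t - 1) * (k ^ 2 - 3 * k + 2 * t) * (k ^ 2 - k + 2 * t))


section AuxStmt14

private lemma kk_ge' (e : ℕ) (he : 4 ≤ e) : 3 ≤ kk e := by
  unfold kk
  exact Nat.le_findGreatest (by omega) (by omega)

private lemma kk_spec' (e : ℕ) (he : 4 ≤ e) : kk e * (kk e - 1) ≤ 2 * e := by
  unfold kk
  exact Nat.findGreatest_spec (P := fun k => k * (k - 1) ≤ 2 * e) (m := 3) (by omega)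
    (show 3 * (3 - 1) ≤ 2 * e by omega)

private lemma kk_ub' (e : ℕ) (he : 4 ≤ e) : 2 * e < (kk e + 1) * kk e := by
  have hs := kk_spec' e he
  have hg := kk_ge' e he
  unfold kk at *
  set F := Nat.findGreatest (fun k => k * (k - 1) ≤ 2 * e) (e + 2) with hF
  have h1 : F ≤ e + 2 := Nat.findGreatest_le _
  have hle : F + 1 ≤ e + 2 := by
    rcases Nat.lt_or_ge F (e + 2) with h | h
    · omega
    · exfalso
      have he2 : F = e + 2 := le_antisymm h1 h
      rw [he2] at hs
      have : (e + 2) * (e + 1) ≤ 2 * e := by simpa using hs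
      nlinarith
  have := Nat.findGreatest_is_greatest (P := fun k => k * (k - 1) ≤ 2 * e)
    (n := e + 2) (k := F + 1) (by omega) hle
  simp only [Nat.add_sub_cancel, not_le] at this
  exact this

private lemma t_facts' (e : ℕ) (he : 4 ≤ e) :
    2 * tt e = 2 * e - kk e * (kk e - 1) ∧ tt e + 1 ≤ kk e := by
  have hs := kk_spec' e he
  have hu := kk_ub' e he
  have hg := kk_ge' e he
  have hev : 2 ∣ kk e * (kk e - 1) := by
    have h := Nat.even_mul_succ_self (kk e - 1)
    have h2 : (kk e - 1) * (kk e - 1 + 1) = kk e * (kk e - 1) := by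
      rw [mul_comm]; congr 1; omega
    rw [h2] at h; exact h.two_dvd
  obtain ⟨m, hm⟩ := hev
  have htt : tt e = e - m := by unfold tt; rw [hm]; omega
  have hub2 : (kk e + 1) * kk e = kk e * (kk e - 1) + 2 * kk e := by
    obtain ⟨c, hc⟩ := Nat.exists_eq_add_of_le (by omega : 1 ≤ kk e)
    rw [hc]
    have h1 : 1 + c - 1 = c := by omega
    rw [h1]; ring
  omega

private lemma key_ineq (K T : ℝ) (hK : 3 ≤ K) (hT0 : 0 ≤ T) (hT : T + 1 ≤ K) :
    24*T + 8*T^2 - 12*T^3 - 4*T^4 - 16*K + 4*K*T + 22*K*T^2 + 4*K*T^3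
    - 32*K^2*T - 23*K^2*T^2 - 4*K^2*T^3 + 20*K^3 + 12*K^3*T - 6*K^3*T^2
    + 8*K^4*T - K^4*T^2 - 4*K^5 < 0 := by
  nlinarith [mul_nonneg hT0 hT0, sq_nonneg (K-3), sq_nonneg T,
    mul_nonneg (mul_nonneg hT0 hT0) hT0,
    mul_nonneg hT0 (sub_nonneg.2 (by linarith : T + 1 ≤ K)), sq_nonneg (K - T - 1),
    mul_nonneg (sub_nonneg.2 hK) hT0, mul_nonneg (sub_nonneg.2 hK) (sub_nonneg.2 hK),
    sq_nonneg (K*T - 4*T), sq_nonneg (K^2 - 3*K),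
    mul_pos (by linarith : (0:ℝ) < K) (by linarith : (0:ℝ) < K)]

private lemma cubic_deg_le (a b c d : ℝ) :
    (C a * X^3 - C b * X^2 - C c * X + C d).degree ≤ 3 := by
  compute_degree

private lemma cubic_coeff3 (a b c d : ℝ) :
    (C a * X^3 - C b * X^2 - C c * X + C d).coeff 3 = a := by
  simp [coeff_X, coeff_C]

private lemma cubic_eval (a b c d x : ℝ) :
    (C a * X^3 - C b * X^2 - C c * X + C d).eval x = a*x^3 - b*x^2 - c*x + d := by
  simp

end AuxStmt14

theorem stmt_14 (e : ℕ) (he : 4 ≤ e) (ψ : ℝ) (hψ : IsGreatestRoot (PsiPoly e) ψ) :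
    (kk e : ℝ) + 1 < ψ := by
  have hk3 := kk_ge' e he
  obtain ⟨ht2, htk⟩ := t_facts' e he
  set K : ℝ := (kk e : ℝ) with hKdef
  set T : ℝ := (tt e : ℝ) with hTdef
  have hK : 3 ≤ K := by rw [hKdef]; exact_mod_cast hk3
  have hT0 : 0 ≤ T := by positivity
  have hT : T + 1 ≤ K := by
    have : ((tt e : ℕ) : ℝ) + 1 ≤ ((kk e : ℕ) : ℝ) := by exact_mod_cast htk
    simpa using this
  have hcase : 4 ≤ kk e ∨ 1 ≤ tt e := by
    rcases Nat.lt_or_ge (kk e) 4 with h | h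
    · right
      have h3 : kk e = 3 := by omega
      rw [h3] at ht2
      omega
    · left; exact h
  -- abbreviations for the four coefficients
  have hpsi : PsiPoly e =
      C ((K - 1) * (K - 2) * (K ^ 2 - 3 * K + 4 * T)) * X^3
      - C (K ^ 5 - 6 * K ^ 4 + K ^ 3 * (4 * T + 15) - K ^ 2 * (20 * T + 18)
            + K * (8 * T ^ 2 + 24 * T + 8) - (4 * T ^ 2 + 12 * T)) * X^2
      - C ((K ^ 2 - K + 2 * T) * (K ^ 3 + K ^ 2 * (T - 4) - K * (3 * T - 5)
            + (4 * T ^ 2 - 2 * T - 2))) * X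
      + C (T * (K - T - 1) * (K ^ 2 - 3 * K + 2 * T) * (K ^ 2 - K + 2 * T)) := rfl
  -- the leading coefficient is positive
  have ha3 : 0 < (K - 1) * (K - 2) * (K ^ 2 - 3 * K + 4 * T) := by
    have h1 : 0 < K - 1 := by linarith
    have h2 : 0 < K - 2 := by linarith
    have h3 : 0 < K ^ 2 - 3 * K + 4 * T := by
      rcases hcase with h | h
      · have : (4 : ℝ) ≤ K := by rw [hKdef]; exact_mod_cast h
        nlinarith
      · have : (1 : ℝ) ≤ T := by rw [hTdef]; exact_mod_cast h
        nlinarith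
    positivity
  have hdeg : (PsiPoly e).degree = 3 := by
    rw [hpsi]
    exact Polynomial.degree_eq_of_le_of_coeff_ne_zero (cubic_deg_le _ _ _ _)
      (by rw [cubic_coeff3]; exact ne_of_gt ha3)
  have hdegpos : 0 < (PsiPoly e).degree := by rw [hdeg]; norm_num
  have hlc : 0 ≤ (PsiPoly e).leadingCoeff := by
    rw [Polynomial.leadingCoeff, Polynomial.natDegree_eq_of_degree_eq_some hdeg, hpsi,
      cubic_coeff3]
    exact ha3.le
  -- Psi is negative at K + 1
  have hneg : (PsiPoly e).eval (K + 1) < 0 := by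
    rw [hpsi, cubic_eval]
    have hkey := key_ineq K T hK hT0 hT
    nlinarith [hkey]
  -- Psi tends to infinity
  have htend := Polynomial.tendsto_atTop_of_leadingCoeff_nonneg (PsiPoly e) hdegpos hlc
  obtain ⟨x, hx1, hx2⟩ :=
    ((htend.eventually_ge_atTop 1).and (Filter.eventually_ge_atTop (K + 1))).exists
  have hcont : ContinuousOn (fun y => (PsiPoly e).eval y) (Set.Icc (K + 1) x) :=
    (Polynomial.continuous _).continuousOn
  have h0mem : (0 : ℝ) ∈ Set.Icc ((PsiPoly e).eval (K + 1)) ((PsiPoly e).eval x) :=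
    ⟨hneg.le, by linarith⟩
  obtain ⟨y, hy, hy0⟩ := intermediate_value_Icc hx2 hcont h0mem
  have hy0' : (PsiPoly e).eval y = 0 := hy0
  have hyle : y ≤ ψ := hψ.2 y hy0'
  have hyge : K + 1 ≤ y := hy.1
  have hyne : y ≠ K + 1 := by
    intro h
    rw [h] at hy0'
    rw [hy0'] at hneg
    exact lt_irrefl 0 hneg
  have : K + 1 < y := lt_of_le_of_ne hyge (Ne.symm hyne)
  linarith
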